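/- If constant vectors γ₁,γ₂,γ₃∈ℝ² satisfy Curl^s( Σ_{i=1}^{3} φ_i γ_i )(x) = 0 for all x∈ℝ², then γ₁=γ₂=γ₃=0. Equivalently, the six matrix-valued functions Curl^s(φ_i e₁), Curl^s(φ_i e₂), i=1,2,3 (with e₁=(1,0)ᵀ, e₂=(0,1)ᵀ), are linearly independent over ℝ. -/

import Mathlib

open Matrix

lemma key_alg (a0 a1 a2 b0 b1 b2 u0 u1 u2 v0 v1 v2 : ℝ)
    (hA0 : b1*u2 + b2*u1 = 0) (hA1 : b2*u0 + b0*u2 = 0) (hA2 : b0*u1 + b1*u0 = 0)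
    (hB0 : a1*v2 + a2*v1 = 0) (hB1 : a2*v0 + a0*v2 = 0) (hB2 : a0*v1 + a1*v0 = 0)
    (hC0 : a1*u2 + a2*u1 = b1*v2 + b2*v1)
    (hC1 : a2*u0 + a0*u2 = b2*v0 + b0*v2)
    (hC2 : a0*u1 + a1*u0 = b0*v1 + b1*v0)
    (d01 : a0*b1 - a1*b0 ≠ 0) (d12 : a1*b2 - a2*b1 ≠ 0) (d20 : a2*b0 - a0*b2 ≠ 0) :
    u0 = 0 ∧ u1 = 0 ∧ u2 = 0 ∧ v0 = 0 ∧ v1 = 0 ∧ v2 = 0 := by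
  have resolve : ∀ s t : ℝ, s ≠ 0 → s * t = 0 → t = 0 := fun s t hs h =>
    (mul_eq_zero.mp h).resolve_left hs
  by_cases hb0 : b0 = 0
  · -- b0 = 0 ⇒ a0, b1, b2 ≠ 0
    have h1 : a0 * b1 ≠ 0 := by intro h; apply d01; rw [hb0]; linarith
    have h2 : a0 * b2 ≠ 0 := by intro h; apply d20; rw [hb0]; linarith
    obtain ⟨ha0, hb1⟩ := mul_ne_zero_iff.mp h1
    have hb2 : b2 ≠ 0 := (mul_ne_zero_iff.mp h2).2
    have hu0 : u0 = 0 := resolve b2 u0 hb2 (by linear_combination hA1 - u2 * hb0)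
    have e1 : a0*u2 = b2*v0 := by linear_combination hC1 - a2 * hu0 + v2 * hb0
    have e2 : a0*u1 = b1*v0 := by linear_combination hC2 - a1 * hu0 + v1 * hb0
    have e3 : b1*u2 = b2*u1 := by
      have : a0 * (b1*u2 - b2*u1) = 0 := by linear_combination b1 * e1 - b2 * e2
      have := resolve a0 _ ha0 this; linarith
    have hu1 : u1 = 0 := by
      have : b2 * (2 * u1) = 0 := by linear_combination hA0 - e3
      have := resolve b2 _ hb2 this; linarith
    have hu2 : u2 = 0 := resolve b1 u2 hb1 (by linear_combination e3 + b2 * hu1)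
    have hv0 : v0 = 0 := resolve b2 v0 hb2 (by linear_combination -e1 + a0 * hu2)
    have hv2 : v2 = 0 := resolve a0 v2 ha0 (by linear_combination hB1 - a2 * hv0)
    have hv1 : v1 = 0 := resolve a0 v1 ha0 (by linear_combination hB2 - a1 * hv0)
    exact ⟨hu0, hu1, hu2, hv0, hv1, hv2⟩
  by_cases hb1 : b1 = 0
  · -- b1 = 0 ⇒ a1, b0, b2 ≠ 0
    have h1 : a1 * b0 ≠ 0 := by intro h; apply d01; rw [hb1]; linarith
    have h2 : a1 * b2 ≠ 0 := by intro h; apply d12; rw [hb1]; linarith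
    obtain ⟨ha1, hb0'⟩ := mul_ne_zero_iff.mp h1
    have hb2 : b2 ≠ 0 := (mul_ne_zero_iff.mp h2).2
    have hu1 : u1 = 0 := resolve b0 u1 hb0' (by linear_combination hA2 - u0 * hb1)
    have e1 : a1*u0 = b0*v1 := by linear_combination hC2 - a0 * hu1 + v0 * hb1
    have e2 : a1*u2 = b2*v1 := by linear_combination hC0 - a2 * hu1 + v2 * hb1
    have e3 : b2*u0 = b0*u2 := by
      have : a1 * (b2*u0 - b0*u2) = 0 := by linear_combination b2 * e1 - b0 * e2
      have := resolve a1 _ ha1 this; linarith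
    have hu0 : u0 = 0 := by
      have : b2 * (2 * u0) = 0 := by linear_combination hA1 + e3
      have := resolve b2 _ hb2 this; linarith
    have hu2 : u2 = 0 := resolve b0 u2 hb0' (by linear_combination -e3 + b2 * hu0)
    have hv1 : v1 = 0 := resolve b0 v1 hb0' (by linear_combination -e1 + a1 * hu0)
    have hv2 : v2 = 0 := resolve a1 v2 ha1 (by linear_combination hB0 - a2 * hv1)
    have hv0 : v0 = 0 := resolve a1 v0 ha1 (by linear_combination hB2 - a0 * hv1)
    exact ⟨hu0, hu1, hu2, hv0, hv1, hv2⟩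
  by_cases hb2 : b2 = 0
  · -- b2 = 0 ⇒ a2, b0, b1 ≠ 0
    have h1 : a2 * b1 ≠ 0 := by intro h; apply d12; rw [hb2]; linarith
    have h2 : a2 * b0 ≠ 0 := by intro h; apply d20; rw [hb2]; linarith
    obtain ⟨ha2, hb1'⟩ := mul_ne_zero_iff.mp h1
    have hb0' : b0 ≠ 0 := (mul_ne_zero_iff.mp h2).2
    have hu2 : u2 = 0 := resolve b1 u2 hb1' (by linear_combination hA0 - u1 * hb2)
    have e1 : a2*u1 = b1*v2 := by linear_combination hC0 - a1 * hu2 + v1 * hb2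
    have e2 : a2*u0 = b0*v2 := by linear_combination hC1 - a0 * hu2 + v0 * hb2
    have e3 : b0*u1 = b1*u0 := by
      have : a2 * (b0*u1 - b1*u0) = 0 := by linear_combination b0 * e1 - b1 * e2
      have := resolve a2 _ ha2 this; linarith
    have hu1 : u1 = 0 := by
      have : b0 * (2 * u1) = 0 := by linear_combination hA2 + e3
      have := resolve b0 _ hb0' this; linarith
    have hu0 : u0 = 0 := resolve b1 u0 hb1' (by linear_combination hA2 - b0 * hu1)
    have hv2 : v2 = 0 := resolve b0 v2 hb0' (by linear_combination -e2 + a2 * hu0)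
    have hv0 : v0 = 0 := resolve a2 v0 ha2 (by linear_combination hB1 - a0 * hv2)
    have hv1 : v1 = 0 := resolve a2 v1 ha2 (by linear_combination hB0 - a1 * hv2)
    exact ⟨hu0, hu1, hu2, hv0, hv1, hv2⟩
  · -- all b nonzero
    have hu0 : u0 = 0 := by
      have : b1 * b2 * (2 * u0) = 0 := by
        linear_combination b1 * hA1 - b0 * hA0 + b2 * hA2
      have := resolve _ _ (mul_ne_zero hb1 hb2) this; linarith
    have hu1 : u1 = 0 := by
      have : b2 * b0 * (2 * u1) = 0 := by
        linear_combination b2 * hA2 - b1 * hA1 + b0 * hA0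
      have := resolve _ _ (mul_ne_zero hb2 hb0) this; linarith
    have hu2 : u2 = 0 := by
      have : b0 * b1 * (2 * u2) = 0 := by
        linear_combination b0 * hA0 - b2 * hA2 + b1 * hA1
      have := resolve _ _ (mul_ne_zero hb0 hb1) this; linarith
    have hC0' : b1*v2 + b2*v1 = 0 := by linear_combination -hC0 + a1 * hu2 + a2 * hu1
    have hC1' : b2*v0 + b0*v2 = 0 := by linear_combination -hC1 + a2 * hu0 + a0 * hu2
    have hC2' : b0*v1 + b1*v0 = 0 := by linear_combination -hC2 + a0 * hu1 + a1 * hu0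
    have hv0 : v0 = 0 := by
      have : b1 * b2 * (2 * v0) = 0 := by
        linear_combination b1 * hC1' - b0 * hC0' + b2 * hC2'
      have := resolve _ _ (mul_ne_zero hb1 hb2) this; linarith
    have hv1 : v1 = 0 := by
      have : b2 * b0 * (2 * v1) = 0 := by
        linear_combination b2 * hC2' - b1 * hC1' + b0 * hC0'
      have := resolve _ _ (mul_ne_zero hb2 hb0) this; linarith
    have hv2 : v2 = 0 := by
      have : b0 * b1 * (2 * v2) = 0 := by
        linear_combination b0 * hC0' - b2 * hC2' + b1 * hC1'
      have := resolve _ _ (mul_ne_zero hb0 hb1) this; linarith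
    exact ⟨hu0, hu1, hu2, hv0, hv1, hv2⟩


/-- `Curl φ` of a vector field `φ : ℝ² → ℝ²`: the 2×2 matrix field whose `i`-th
row is `(curl φ_i)ᵀ = (−∂_{x₂} φ_i, ∂_{x₁} φ_i)`. -/
noncomputable def Curl (r : (Fin 2 → ℝ) → Fin 2 → ℝ) (x : Fin 2 → ℝ) :
    Matrix (Fin 2) (Fin 2) ℝ :=
  Matrix.of fun i j =>
    if j = 0 then -(fderiv ℝ r x ![0, 1] i) else fderiv ℝ r x ![1, 0] i

/-- The symmetric part `Curl^s φ = (Curl φ + (Curl φ)ᵀ)/2`. -/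
noncomputable def CurlS (r : (Fin 2 → ℝ) → Fin 2 → ℝ) (x : Fin 2 → ℝ) :
    Matrix (Fin 2) (Fin 2) ℝ :=
  (2⁻¹ : ℝ) • (Curl r x + (Curl r x)ᵀ)

/-- On a nondegenerate triangle with barycentric coordinates `λ_k` and bubbles
`φ_k = λ_{k−1} λ_{k+1}` (indices mod 3): if constant vectors `γ₁, γ₂, γ₃ ∈ ℝ²`
satisfy `Curl^s(Σ_i φ_i γ_i) = 0` everywhere, then `γ₁ = γ₂ = γ₃ = 0`;
equivalently the six fields `Curl^s(φ_i e_j)` are linearly independent. -/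
theorem curlS_bubble_linear_independence
    (p : ZMod 3 → Fin 2 → ℝ) (hp : AffineIndependent ℝ p)
    (lam : ZMod 3 → (Fin 2 → ℝ) → ℝ)
    (hlam_aff : ∀ k, ∃ a b c : ℝ, ∀ x, lam k x = a * x 0 + b * x 1 + c)
    (hlam_val : ∀ k j, lam k (p j) = if k = j then 1 else 0)
    (γ : ZMod 3 → Fin 2 → ℝ)
    (hzero : ∀ x, CurlS
      (fun y => ∑ i : ZMod 3, (lam (i - 1) y * lam (i + 1) y) • γ i) x = 0) :
    ∀ i, γ i = 0 := by
  choose a b c hlam using hlam_aff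
  have hsum : ∀ f : ZMod 3 → ℝ, ∑ i, f i = f 0 + f 1 + f 2 := by
    intro f; show ∑ i : Fin 3, f i = _; exact Fin.sum_univ_three f
  -- derivative formula
  have hfd : ∀ (x w : Fin 2 → ℝ) (j : Fin 2),
      fderiv ℝ (fun y => ∑ i : ZMod 3, (lam (i - 1) y * lam (i + 1) y) • γ i) x w j
      = ∑ i : ZMod 3, (lam (i-1) x * (a (i+1) * w 0 + b (i+1) * w 1)
          + lam (i+1) x * (a (i-1) * w 0 + b (i-1) * w 1)) * γ i j := by
    intro x w j
    have hD : ∀ k (x : Fin 2 → ℝ), HasFDerivAt (lam k)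
        (a k • ContinuousLinearMap.proj 0 + b k • ContinuousLinearMap.proj 1 :
          (Fin 2 → ℝ) →L[ℝ] ℝ) x := by
      intro k x
      have h : lam k = fun y => a k * y 0 + b k * y 1 + c k := funext (hlam k)
      rw [h]
      exact (((ContinuousLinearMap.proj 0 : (Fin 2 → ℝ) →L[ℝ] ℝ).hasFDerivAt.const_mul
        (a k)).add (((ContinuousLinearMap.proj 1 : (Fin 2 → ℝ) →L[ℝ] ℝ)).hasFDerivAt.const_mul
        (b k))).add_const (c k)
    have hr : HasFDerivAt (fun y => ∑ i : ZMod 3, (lam (i - 1) y * lam (i + 1) y) • γ i)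
        (∑ i : ZMod 3, ((lam (i-1) x • (a (i+1) • ContinuousLinearMap.proj 0 + b (i+1) • ContinuousLinearMap.proj 1)
          + lam (i+1) x • (a (i-1) • ContinuousLinearMap.proj 0 + b (i-1) • ContinuousLinearMap.proj 1) :
          (Fin 2 → ℝ) →L[ℝ] ℝ).smulRight (γ i))) x :=
      HasFDerivAt.fun_sum fun i _ => ((hD (i-1) x).mul (hD (i+1) x)).smul_const (γ i)
    rw [hr.fderiv]
    simp only [ContinuousLinearMap.sum_apply, ContinuousLinearMap.smulRight_apply,
      ContinuousLinearMap.add_apply, ContinuousLinearMap.smul_apply,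
      ContinuousLinearMap.proj_apply, Finset.sum_apply, Pi.smul_apply, smul_eq_mul]
    all_goals exact Finset.sum_congr rfl fun i _ => by ring
  -- three families of identities
  have h1 : ∀ x : Fin 2 → ℝ,
      ∑ i : ZMod 3, (lam (i-1) x * b (i+1) + lam (i+1) x * b (i-1)) * γ i 0 = 0 := by
    intro x
    have h := congrFun (congrFun (hzero x) 0) 0
    simp only [CurlS, Curl, Matrix.smul_apply, Matrix.add_apply, Matrix.transpose_apply,
      Matrix.of_apply, if_pos rfl, if_true, Matrix.zero_apply, smul_eq_mul] at h
    have h' : fderiv ℝ (fun y => ∑ i : ZMod 3, (lam (i - 1) y * lam (i + 1) y) • γ i) x ![0,1] 0 = 0 := by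
      linarith
    rw [hfd] at h'
    rw [← h']
    apply Finset.sum_congr rfl
    intro i _
    norm_num
  have h2 : ∀ x : Fin 2 → ℝ,
      ∑ i : ZMod 3, (lam (i-1) x * a (i+1) + lam (i+1) x * a (i-1)) * γ i 1 = 0 := by
    intro x
    have h := congrFun (congrFun (hzero x) 1) 1
    simp only [CurlS, Curl, Matrix.smul_apply, Matrix.add_apply, Matrix.transpose_apply,
      Matrix.of_apply, Matrix.zero_apply, smul_eq_mul] at h
    norm_num at h
    rw [hfd] at h
    rw [← h]
    apply Finset.sum_congr rfl
    intro i _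
    norm_num
  have h3 : ∀ x : Fin 2 → ℝ,
      ∑ i : ZMod 3, (lam (i-1) x * a (i+1) + lam (i+1) x * a (i-1)) * γ i 0 =
      ∑ i : ZMod 3, (lam (i-1) x * b (i+1) + lam (i+1) x * b (i-1)) * γ i 1 := by
    intro x
    have h := congrFun (congrFun (hzero x) 0) 1
    simp only [CurlS, Curl, Matrix.smul_apply, Matrix.add_apply, Matrix.transpose_apply,
      Matrix.of_apply, Matrix.zero_apply, smul_eq_mul] at h
    norm_num at h
    rw [hfd, hfd] at h
    have hL : ∑ i : ZMod 3, (lam (i-1) x * a (i+1) + lam (i+1) x * a (i-1)) * γ i 0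
        = ∑ i : ZMod 3, (lam (i-1) x * (a (i+1) * (![1,0] : Fin 2 → ℝ) 0 + b (i+1) * (![1,0] : Fin 2 → ℝ) 1)
          + lam (i+1) x * (a (i-1) * (![1,0] : Fin 2 → ℝ) 0 + b (i-1) * (![1,0] : Fin 2 → ℝ) 1)) * γ i 0 := by
      apply Finset.sum_congr rfl; intro i _; norm_num
    have hR : ∑ i : ZMod 3, (lam (i-1) x * b (i+1) + lam (i+1) x * b (i-1)) * γ i 1
        = ∑ i : ZMod 3, (lam (i-1) x * (a (i+1) * (![0,1] : Fin 2 → ℝ) 0 + b (i+1) * (![0,1] : Fin 2 → ℝ) 1)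
          + lam (i+1) x * (a (i-1) * (![0,1] : Fin 2 → ℝ) 0 + b (i-1) * (![0,1] : Fin 2 → ℝ) 1)) * γ i 1 := by
      apply Finset.sum_congr rfl; intro i _; norm_num
    rw [hL, hR]
    linarith
  -- pairwise determinants nonzero
  have hd : ∀ k l : ZMod 3, k ≠ l → a k * b l - a l * b k ≠ 0 := by
    intro k l hkl h
    obtain ⟨m, hkm, hlm⟩ :=
      (by decide : ∀ k l : ZMod 3, k ≠ l → ∃ m, k ≠ m ∧ l ≠ m) k l hkl
    have key1 : ∀ x, b l * lam k x - b k * lam l x = b l * c k - b k * c l := by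
      intro x; rw [hlam, hlam]; linear_combination (x 0) * h
    have key2 : ∀ x, a l * lam k x - a k * lam l x = a l * c k - a k * c l := by
      intro x; rw [hlam, hlam]; linear_combination (-(x 1)) * h
    have e1 := key1 (p k); have e2 := key1 (p l); have e3 := key1 (p m)
    have f1 := key2 (p k); have f2 := key2 (p l); have f3 := key2 (p m)
    simp only [hlam_val, if_pos rfl, if_neg hkl, if_neg (Ne.symm hkl),
      if_neg hkm, if_neg hlm] at e1 e2 e3 f1 f2 f3
    norm_num at e1 e2 e3 f1 f2 f3
    have hbk : b k = 0 := by linarith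
    have hak : a k = 0 := by linarith
    have t1 := hlam k (p k); rw [hlam_val k k, if_pos rfl] at t1
    have t2 := hlam k (p l); rw [hlam_val k l, if_neg hkl] at t2
    rw [hak, hbk] at t1 t2
    simp at t1 t2
    rw [← t1] at t2; norm_num at t2
  -- nine vertex equations
  obtain ⟨z1, z2, z3, z4, z5, z6⟩ : (0:ZMod 3) - 1 = 2 ∧ (0:ZMod 3) + 1 = 1 ∧
      (1:ZMod 3) - 1 = 0 ∧ (1:ZMod 3) + 1 = 2 ∧ (2:ZMod 3) - 1 = 1 ∧
      (2:ZMod 3) + 1 = 0 := by decide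
  have n01 : ((0:ZMod 3) = 1) = False := by decide
  have n02 : ((0:ZMod 3) = 2) = False := by decide
  have n10 : ((1:ZMod 3) = 0) = False := by decide
  have n12 : ((1:ZMod 3) = 2) = False := by decide
  have n20 : ((2:ZMod 3) = 0) = False := by decide
  have n21 : ((2:ZMod 3) = 1) = False := by decide
  have A0 := h1 (p 0); have A1 := h1 (p 1); have A2 := h1 (p 2)
  have B0 := h2 (p 0); have B1 := h2 (p 1); have B2 := h2 (p 2)
  have C0 := h3 (p 0); have C1 := h3 (p 1); have C2 := h3 (p 2)
  simp only [hsum] at A0 A1 A2 B0 B1 B2 C0 C1 C2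
  simp only [z1, z2, z3, z4, z5, z6, hlam_val, n01, n02, n10, n12, n20, n21,
    eq_self_iff_true, if_true, if_false, one_mul, zero_mul, mul_zero, mul_one,
    add_zero, zero_add] at A0 A1 A2 B0 B1 B2 C0 C1 C2
  obtain ⟨g00, g10, g20, g01, g11, g21⟩ :=
    key_alg (a 0) (a 1) (a 2) (b 0) (b 1) (b 2)
      (γ 0 0) (γ 1 0) (γ 2 0) (γ 0 1) (γ 1 1) (γ 2 1)
      (by linarith) (by linarith) (by linarith)
      (by linarith) (by linarith) (by linarith)
      (by linarith) (by linarith) (by linarith)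
      (hd 0 1 (by decide)) (hd 1 2 (by decide)) (hd 2 0 (by decide))
  intro i
  funext j
  clear hzero hfd h1 h2 h3 hd hlam hlam_val A0 A1 A2 B0 B1 B2 C0 C1 C2 hsum hp
  fin_cases i <;> fin_cases j <;>
    simp only [Pi.zero_apply] <;>
    first | exact g00 | exact g01 | exact g10 | exact g11 | exact g20 | exact g21
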